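/- Ellipsoid containment for logistic level sets: Assume ‖x_i‖₂ ≤ R for all i, let ℋ = {θ ∈ ℝ^d : ‖θ‖₂ ≤ r} with r, R > 0, and assume A = Σ_{i=1}^n x_i x_iᵀ is positive definite (λ_min(A) > 0). Fix θ* ∈ argmin_{θ∈ℋ} L_S(θ). For t ≥ 0 define the ellipsoid ℰ_t = {θ ∈ ℝ^d : (θ−θ*)ᵀA(θ−θ*) ≤ t} and its truncation ℰ_t^< = ℰ_t ∩ {θ ∈ ℝ^d : ∇L_S(θ*)ᵀ(θ−θ*) ≤ 0}. Then ℰ_{rR}^< ⊆ ℋ_{rR}, and the Lebesgue volumes satisfy vol(ℰ_{rR}^<) ≥ (1/2)·vol(ℰ_{rR}). -/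

import Mathlib

open scoped RealInnerProductSpace

noncomputable def psiAux (t : ℝ) : ℝ := -Real.exp (-t) / (1 + Real.exp (-t))

lemma psiAux_eq (t : ℝ) : psiAux t = -1 / (1 + Real.exp t) := by
  unfold psiAux
  rw [Real.exp_neg]
  have h := (Real.exp_pos t).ne'
  field_simp
  ring

lemma sigma_lip {a b : ℝ} (hab : a ≤ b) :
    1 / (1 + Real.exp a) - 1 / (1 + Real.exp b) ≤ b - a := by
  have hea := Real.exp_pos a
  have heb := Real.exp_pos b
  have hda : (0:ℝ) < 1 + Real.exp a := by linarith
  have hdb : (0:ℝ) < 1 + Real.exp b := by linarith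
  have key : Real.exp b - Real.exp a ≤ (b - a) * Real.exp b := by
    have h := Real.add_one_le_exp (a - b)
    have h2 : (a - b + 1) * Real.exp b ≤ Real.exp (a - b) * Real.exp b :=
      mul_le_mul_of_nonneg_right h heb.le
    rw [← Real.exp_add] at h2
    have : a - b + b = a := by ring
    rw [this] at h2
    nlinarith
  rw [div_sub_div _ _ hda.ne' hdb.ne', div_le_iff₀ (by positivity)]
  nlinarith [mul_nonneg (sub_nonneg.2 hab)
    (by positivity : (0:ℝ) ≤ 1 + Real.exp a + Real.exp a * Real.exp b)]

lemma psi_lip {a b : ℝ} (hab : a ≤ b) : psiAux b - psiAux a ≤ b - a := by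
  rw [psiAux_eq, psiAux_eq]
  rw [neg_div, neg_div]
  have := sigma_lip hab
  linarith

lemma hasDerivAt_logexp (z : ℝ) (h : ℝ) :
    HasDerivAt (fun h : ℝ => Real.log (1 + Real.exp (-(z + h)))) (psiAux (z + h)) h := by
  have h1 : HasDerivAt (fun h : ℝ => -(z + h)) (-1) h := ((hasDerivAt_id h).const_add z).neg
  have h2 := h1.exp
  have h3 := h2.const_add 1
  have h4 := h3.log (by positivity)
  convert h4 using 1
  unfold psiAux
  ring

lemma taylor2 (z h : ℝ) :
    Real.log (1 + Real.exp (-(z + h))) ≤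
      Real.log (1 + Real.exp (-z)) + psiAux z * h + h ^ 2 / 2 := by
  set F : ℝ → ℝ := fun h =>
    Real.log (1 + Real.exp (-(z + h))) - Real.log (1 + Real.exp (-z)) - psiAux z * h - h ^ 2 / 2
    with hFdef
  have hF : ∀ u : ℝ, HasDerivAt F (psiAux (z + u) - psiAux z - u) u := by
    intro u
    have h1 := hasDerivAt_logexp z u
    have h2 : HasDerivAt (fun u : ℝ => psiAux z * u) (psiAux z) u := by
      simpa using (hasDerivAt_id u).const_mul (psiAux z)
    have h3 : HasDerivAt (fun u : ℝ => u ^ 2 / 2) u u := by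
      simpa using ((hasDerivAt_pow 2 u).div_const 2)
    exact ((h1.sub_const _).sub h2).sub h3
  have hderiv : ∀ u : ℝ, deriv F u = psiAux (z + u) - psiAux z - u := fun u => (hF u).deriv
  have hcont : Continuous F := by
    have : Differentiable ℝ F := fun u => (hF u).differentiableAt
    exact this.continuous
  have hF0 : F 0 = 0 := by simp [hFdef]
  rcases le_or_gt 0 h with hh | hh
  · have hanti : AntitoneOn F (Set.Ici (0:ℝ)) := by
      apply antitoneOn_of_deriv_nonpos (convex_Ici 0) hcont.continuousOn
        (fun u hu => (hF u).differentiableAt.differentiableWithinAt)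
      intro u hu
      rw [interior_Ici] at hu
      rw [hderiv]
      have hu' : (0:ℝ) < u := hu
      have := psi_lip (by linarith : z ≤ z + u)
      linarith
    have := hanti (Set.self_mem_Ici) (Set.mem_Ici.2 hh) hh
    rw [hF0] at this
    simp only [hFdef] at this
    linarith
  · have hmono : MonotoneOn F (Set.Iic (0:ℝ)) := by
      apply monotoneOn_of_deriv_nonneg (convex_Iic 0) hcont.continuousOn
        (fun u hu => (hF u).differentiableAt.differentiableWithinAt)
      intro u hu
      rw [interior_Iic] at hu
      rw [hderiv]
      have hu' : u < (0:ℝ) := hu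
      have := psi_lip (by linarith : z + u ≤ z)
      linarith
    have := hmono (Set.mem_Iic.2 hh.le) (Set.self_mem_Iic) hh.le
    rw [hF0] at this
    simp only [hFdef] at this
    linarith

lemma hasDerivAt_logexp' (t : ℝ) :
    HasDerivAt (fun t : ℝ => Real.log (1 + Real.exp (-t))) (psiAux t) t := by
  have h1 : HasDerivAt (fun t : ℝ => -t) (-1) t := (hasDerivAt_id t).neg
  have h4 := (h1.exp.const_add 1).log (by positivity)
  convert h4 using 1
  unfold psiAux
  ring

lemma grad_inner {d n : ℕ} (x : Fin n → EuclideanSpace ℝ (Fin d)) (y : Fin n → ℝ)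
    (θs v : EuclideanSpace ℝ (Fin d))
    (L : EuclideanSpace ℝ (Fin d) → ℝ)
    (hL : ∀ θ, L θ = ∑ i, Real.log (1 + Real.exp (-(y i * ⟪x i, θ⟫)))) :
    ⟪gradient L θs, v⟫ = ∑ i, (psiAux (y i * ⟪x i, θs⟫) * y i) * ⟪x i, v⟫ := by
  have hL' : L = fun θ => ∑ i, Real.log (1 + Real.exp (-(y i * ⟪x i, θ⟫))) := funext hL
  have hterm : ∀ i : Fin n, HasFDerivAt (fun θ : EuclideanSpace ℝ (Fin d) =>
      Real.log (1 + Real.exp (-(y i * ⟪x i, θ⟫))))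
      ((psiAux (y i * ⟪x i, θs⟫) * y i) • innerSL ℝ (x i)) θs := by
    intro i
    have hinner : HasFDerivAt (fun θ : EuclideanSpace ℝ (Fin d) => ⟪x i, θ⟫)
        (innerSL ℝ (x i)) θs := (innerSL ℝ (x i)).hasFDerivAt
    have hlin : HasFDerivAt (fun θ : EuclideanSpace ℝ (Fin d) => y i * ⟪x i, θ⟫)
        (y i • innerSL ℝ (x i)) θs := hinner.const_mul (y i)
    have hcomp := (hasDerivAt_logexp' (y i * ⟪x i, θs⟫)).comp_hasFDerivAt θs hlin
    rw [← smul_smul]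
    exact hcomp
  have hfd : HasFDerivAt L
      (∑ i, (psiAux (y i * ⟪x i, θs⟫) * y i) • innerSL ℝ (x i)) θs := by
    rw [hL']
    exact HasFDerivAt.fun_sum (fun i _ => hterm i)
  have hgrad : gradient L θs = (InnerProductSpace.toDual ℝ _).symm
      (∑ i, (psiAux (y i * ⟪x i, θs⟫) * y i) • innerSL ℝ (x i)) := by
    rw [gradient, hfd.fderiv]
  rw [hgrad, InnerProductSpace.toDual_symm_apply]
  simp [ContinuousLinearMap.sum_apply]

lemma refl_vol {d : ℕ} (c : EuclideanSpace ℝ (Fin d)) (s : Set (EuclideanSpace ℝ (Fin d))) :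
    MeasureTheory.volume ((fun θ => c - θ) ⁻¹' s) = MeasureTheory.volume s := by
  have hcomp : (fun θ : EuclideanSpace ℝ (Fin d) => c - θ)
      = (fun θ => c + θ) ∘ (fun θ => -θ) := by
    funext θ; simp [sub_eq_add_neg]
  rw [hcomp, Set.preimage_comp]
  rw [MeasureTheory.Measure.measure_preimage_neg MeasureTheory.volume
    ((fun θ : EuclideanSpace ℝ (Fin d) => c + θ) ⁻¹' s)]
  exact MeasureTheory.measure_preimage_add MeasureTheory.volume c s

/-- **Ellipsoid containment for logistic level sets.**
Logistic setting with `‖x_i‖ ≤ R`, parameter ball `ℋ = {‖θ‖ ≤ r}`, positive-definite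
empirical second-moment form `u ↦ ∑ i ⟪x_i, u⟫²`, and empirical minimizer `θs` over `ℋ`.
With the ellipsoid `E t = {θ : (θ−θs)ᵀA(θ−θs) ≤ t}` and its truncation
`Elt t = E t ∩ {θ : ⟪∇L(θs), θ−θs⟫ ≤ 0}`, and the level set
`Hlev = {θ ∈ ℋ_A : L(θ) ≤ L(θs) + rR}`, we have `Elt (rR) ⊆ Hlev` and
`vol(Elt (rR)) ≥ (1/2)·vol(E (rR))`. -/
theorem logistic_ellipsoid_containment
    {d n : ℕ} (r R : ℝ) (hr : 0 < r) (hR : 0 < R)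
    (x : Fin n → EuclideanSpace ℝ (Fin d)) (hx : ∀ i, ‖x i‖ ≤ R)
    (y : Fin n → ℝ) (hy : ∀ i, y i = 1 ∨ y i = -1)
    -- A = ∑ x_i x_iᵀ is positive definite
    (hA : ∀ u : EuclideanSpace ℝ (Fin d), u ≠ 0 → 0 < ∑ i, ⟪x i, u⟫ ^ 2)
    (L : EuclideanSpace ℝ (Fin d) → ℝ)
    (hL : ∀ θ, L θ = ∑ i, -Real.log (1 / (1 + Real.exp (-(y i * ⟪x i, θ⟫)))))
    (θs : EuclideanSpace ℝ (Fin d)) (hθs : ‖θs‖ ≤ r)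
    (hθsmin : ∀ θ : EuclideanSpace ℝ (Fin d), ‖θ‖ ≤ r → L θs ≤ L θ)
    -- ℋ_A = {ϑ : inf_{θ ∈ ℋ} ‖ϑ − θ‖_A² ≤ rR}
    (HA : Set (EuclideanSpace ℝ (Fin d)))
    (hHA : HA = {ϑ | ∃ θ : EuclideanSpace ℝ (Fin d),
      ‖θ‖ ≤ r ∧ ∑ i, ⟪x i, ϑ - θ⟫ ^ 2 ≤ r * R})
    (E : ℝ → Set (EuclideanSpace ℝ (Fin d)))
    (hE : ∀ t, E t = {θ | ∑ i, ⟪x i, θ - θs⟫ ^ 2 ≤ t})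
    (Elt : ℝ → Set (EuclideanSpace ℝ (Fin d)))
    (hElt : ∀ t, Elt t = E t ∩ {θ | ⟪gradient L θs, θ - θs⟫ ≤ 0})
    (Hlev : Set (EuclideanSpace ℝ (Fin d)))
    (hHlev : Hlev = {θ ∈ HA | L θ ≤ L θs + r * R}) :
    Elt (r * R) ⊆ Hlev ∧
    MeasureTheory.volume (E (r * R)) ≤ 2 * MeasureTheory.volume (Elt (r * R)) := by
  have hLrw : ∀ θ, L θ = ∑ i, Real.log (1 + Real.exp (-(y i * ⟪x i, θ⟫))) := by
    intro θ
    rw [hL]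
    refine Finset.sum_congr rfl (fun i _ => ?_)
    rw [one_div, Real.log_inv, neg_neg]
  constructor
  · -- containment
    intro θ hθ
    rw [hElt, hE] at hθ
    obtain ⟨hθE, hθg⟩ := hθ
    have hθE : ∑ i, ⟪x i, θ - θs⟫ ^ 2 ≤ r * R := hθE
    have hθg : ⟪gradient L θs, θ - θs⟫ ≤ 0 := hθg
    rw [hHlev]
    refine ⟨by rw [hHA]; exact ⟨θs, hθs, hθE⟩, ?_⟩
    have hsplit : ∀ i : Fin n, y i * ⟪x i, θ⟫ = y i * ⟪x i, θs⟫ + y i * ⟪x i, θ - θs⟫ := by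
      intro i
      rw [inner_sub_right]
      ring
    have hgi := grad_inner x y θs (θ - θs) L hLrw
    calc L θ = ∑ i, Real.log (1 + Real.exp (-(y i * ⟪x i, θs⟫ + y i * ⟪x i, θ - θs⟫))) := by
          rw [hLrw θ]
          exact Finset.sum_congr rfl (fun i _ => by rw [hsplit i])
      _ ≤ ∑ i, (Real.log (1 + Real.exp (-(y i * ⟪x i, θs⟫)))
            + psiAux (y i * ⟪x i, θs⟫) * (y i * ⟪x i, θ - θs⟫)
            + (y i * ⟪x i, θ - θs⟫) ^ 2 / 2) :=
          Finset.sum_le_sum (fun i _ => taylor2 _ _)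
      _ = L θs + (∑ i, (psiAux (y i * ⟪x i, θs⟫) * y i) * ⟪x i, θ - θs⟫)
            + (∑ i, ⟪x i, θ - θs⟫ ^ 2) / 2 := by
          rw [hLrw θs, Finset.sum_add_distrib, Finset.sum_add_distrib, ← Finset.sum_div]
          congr 1
          congr 1
          · exact Finset.sum_congr rfl (fun i _ => by ring)
          · refine congrArg (· / 2) (Finset.sum_congr rfl (fun i _ => ?_))
            rcases hy i with h | h <;> rw [h] <;> ring
      _ ≤ L θs + 0 + (r * R) / 2 := by
          have h1 : (∑ i, (psiAux (y i * ⟪x i, θs⟫) * y i) * ⟪x i, θ - θs⟫) ≤ 0 := by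
            rw [← hgi]; exact hθg
          have h2 : (∑ i, ⟪x i, θ - θs⟫ ^ 2) / 2 ≤ (r * R) / 2 := by linarith
          linarith
      _ ≤ L θs + r * R := by nlinarith
  · -- volume
    have hsub : E (r * R) ⊆ Elt (r * R) ∪ ((fun θ => (θs + θs) - θ) ⁻¹' Elt (r * R)) := by
      intro θ hθ
      rw [hE] at hθ
      have hθ : ∑ i, ⟪x i, θ - θs⟫ ^ 2 ≤ r * R := hθ
      rcases le_or_gt ⟪gradient L θs, θ - θs⟫ 0 with hg | hg
      · left
        rw [hElt, hE]
        exact ⟨hθ, hg⟩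
      · right
        show (θs + θs) - θ ∈ Elt (r * R)
        rw [hElt, hE]
        have hv : (θs + θs) - θ - θs = -(θ - θs) := by abel
        constructor
        · show ∑ i, ⟪x i, (θs + θs) - θ - θs⟫ ^ 2 ≤ r * R
          rw [hv]
          calc ∑ i, ⟪x i, -(θ - θs)⟫ ^ 2
              = ∑ i, ⟪x i, θ - θs⟫ ^ 2 :=
                Finset.sum_congr rfl (fun i _ => by rw [inner_neg_right]; ring)
            _ ≤ r * R := hθ
        · show ⟪gradient L θs, (θs + θs) - θ - θs⟫ ≤ 0
          rw [hv, inner_neg_right]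
          linarith
    calc MeasureTheory.volume (E (r * R))
        ≤ MeasureTheory.volume (Elt (r * R) ∪ ((fun θ => (θs + θs) - θ) ⁻¹' Elt (r * R))) :=
          MeasureTheory.measure_mono hsub
      _ ≤ MeasureTheory.volume (Elt (r * R))
            + MeasureTheory.volume ((fun θ => (θs + θs) - θ) ⁻¹' Elt (r * R)) :=
          MeasureTheory.measure_union_le _ _
      _ = 2 * MeasureTheory.volume (Elt (r * R)) := by
          rw [refl_vol (θs + θs) (Elt (r * R)), two_mul]
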